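/- arXiv:1812.07447 — 2 statements merged into one kernel-verified Lean document; each statement's English description precedes it below -/
import Mathlib

section
/- Let A be a self-adjoint operator on H which is √G-bounded. Then for every p ∈ [0,1) the operator |A|^p (defined via the spectral calculus of A) is √G-infinitesimal, and ‖A^p‖^G_E ≤ (‖A‖^G_E)^p for every E>0. -/
/-! # Common infrastructure for formalizing
"Energy-constrained diamond norms and quantum dynamical semigroups"
(Shirokov–Holevo).

Trace-class operators on a Hilbert space `H` are modelled as bounded operators
with finite trace norm, the trace norm being given by its variational
characterization over finite orthonormal systems.  Unbounded positive operators
`G` are modelled through their quadratic forms `φ ↦ ‖√G φ‖²` (with value `∞`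
off the form domain); discrete operators are given concretely by an
orthonormal eigenbasis and eigenvalues.  The Hilbert tensor product
`H_A ⊗ H_R` is modelled by a Hilbert space `HAR` together with a bilinear map
satisfying the characteristic inner-product identity and totality. -/

noncomputable section

open scoped ENNReal
open ContinuousLinearMap MeasureTheory Filter Topology

/-- The rank-one operator `|x⟩⟨y|`. -/
def rankOne {H : Type*} [NormedAddCommGroup H] [InnerProductSpace ℂ H] [CompleteSpace H]
    (x y : H) : H →L[ℂ] H :=
  (InnerProductSpace.toDual ℂ H y).smulRight x

/-- The trace norm `‖T‖₁ ∈ [0,∞]` of a bounded operator, via its variational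
characterization as the supremum of `∑ i ‖⟪e i, T (f i)⟫‖` over finite
orthonormal systems `e`, `f`. -/
def traceNorm {H : Type*} [NormedAddCommGroup H] [InnerProductSpace ℂ H] [CompleteSpace H]
    (T : H →L[ℂ] H) : ℝ≥0∞ :=
  ⨆ (n : ℕ) (e : Fin n → H) (f : Fin n → H) (_ : Orthonormal ℂ e) (_ : Orthonormal ℂ f),
    ENNReal.ofReal (∑ i, ‖(inner ℂ (e i) (T (f i)) : ℂ)‖)

/-- A bounded operator is trace class if its trace norm is finite. -/
def IsTraceClass {H : Type*} [NormedAddCommGroup H] [InnerProductSpace ℂ H] [CompleteSpace H]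
    (T : H →L[ℂ] H) : Prop :=
  traceNorm T ≠ ∞

/-- A choice of orthonormal basis index set for `H`. -/
def stdIndex (H : Type*) [NormedAddCommGroup H] [InnerProductSpace ℂ H]
    [CompleteSpace H] : Set H :=
  (exists_hilbertBasis ℂ H).choose

/-- A choice of Hilbert basis of `H`. -/
def stdBasis (H : Type*) [NormedAddCommGroup H] [InnerProductSpace ℂ H]
    [CompleteSpace H] : HilbertBasis (stdIndex H) ℂ H :=
  (exists_hilbertBasis ℂ H).choose_spec.choose

/-- The trace of an operator (meaningful on trace-class operators; junk value
otherwise). -/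
def opTrace {H : Type*} [NormedAddCommGroup H] [InnerProductSpace ℂ H] [CompleteSpace H]
    (T : H →L[ℂ] H) : ℂ :=
  ∑' i : stdIndex H, (inner ℂ (stdBasis H i) (T (stdBasis H i)) : ℂ)

/-- A state: a positive operator of unit trace (equivalently, of unit trace
norm). -/
def IsState {H : Type*} [NormedAddCommGroup H] [InnerProductSpace ℂ H] [CompleteSpace H]
    (ρ : H →L[ℂ] H) : Prop :=
  ρ.IsPositive ∧ traceNorm ρ = 1

/-- A pure state: a rank-one orthogonal projection. -/
def IsPureState {H : Type*} [NormedAddCommGroup H] [InnerProductSpace ℂ H] [CompleteSpace H]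
    (ρ : H →L[ℂ] H) : Prop :=
  ∃ z : H, ‖z‖ = 1 ∧ ρ = rankOne z z

/-- The quadratic form `φ ↦ ‖√G φ‖²` (value `∞` off the form domain) of a
densely defined positive self-adjoint operator `G`.  Closed nonnegative densely
defined quadratic forms correspond exactly to positive self-adjoint operators,
so this structure is a faithful encoding of such an operator. -/
structure PosForm (H : Type*) [NormedAddCommGroup H] [InnerProductSpace ℂ H] where
  /-- the quadratic form `φ ↦ ‖√G φ‖²` -/
  q : H → ℝ≥0∞
  q_smul : ∀ (c : ℂ) (φ : H), q (c • φ) = ENNReal.ofReal (‖c‖ ^ 2) * q φ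
  q_parallelogram : ∀ φ ψ : H, q (φ + ψ) + q (φ - ψ) = 2 * q φ + 2 * q ψ
  q_denseDomain : Dense {φ : H | q φ ≠ ∞}
  q_lsc : LowerSemicontinuous q

/-- The quadratic form of the discrete operator `G = ∑ₖ Eₖ |τₖ⟩⟨τₖ|`, namely
`φ ↦ ‖√G φ‖² = ∑ₖ Eₖ |⟨τₖ, φ⟩|²`. -/
def discreteForm {H : Type*} [NormedAddCommGroup H] [InnerProductSpace ℂ H]
    (τ : ℕ → H) (Ek : ℕ → ℝ) : H → ℝ≥0∞ :=
  fun φ => ∑' k, ENNReal.ofReal (Ek k) * ENNReal.ofReal (‖(inner ℂ (τ k) φ : ℂ)‖ ^ 2)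

/-- The data `(τ, Ek)` describes a discrete (positive, unbounded, with discrete
spectrum of finite multiplicity) operator `G = ∑ₖ Eₖ |τₖ⟩⟨τₖ|`: `τ` is an
orthonormal basis and the eigenvalue sequence is nonnegative, nondecreasing and
tends to `+∞`. -/
structure IsDiscreteOperator {H : Type*} [NormedAddCommGroup H] [InnerProductSpace ℂ H]
    (τ : ℕ → H) (Ek : ℕ → ℝ) : Prop where
  orthonormal : Orthonormal ℂ τ
  total : (Submodule.span ℂ (Set.range τ)).topologicalClosure = ⊤
  nonneg : 0 ≤ Ek 0
  mono : Monotone Ek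
  tendsto_top : Tendsto Ek atTop atTop

/-- The energy `Tr ρ G` of a positive (trace-class) operator `ρ`, expressed via
(the common value over) decompositions `ρ = ∑ᵢ |φᵢ⟩⟨φᵢ|` as `∑ᵢ ‖√G φᵢ‖²`,
where the form `q` is `φ ↦ ‖√G φ‖²`. -/
def energy {H : Type*} [NormedAddCommGroup H] [InnerProductSpace ℂ H] [CompleteSpace H]
    (q : H → ℝ≥0∞) (ρ : H →L[ℂ] H) : ℝ≥0∞ :=
  ⨆ (φ : ℕ → H) (_ : ρ = ∑' i, rankOne (φ i) (φ i)), ∑' i, q (φ i)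

/-- `A` satisfies the relative bound `‖Aφ‖² ≤ a²‖φ‖² + b²‖√G φ‖²` on the domain
of `√G` (`q` is the form of `G`). -/
def SqrtRelBoundWith {H : Type*} [NormedAddCommGroup H] [InnerProductSpace ℂ H]
    (q : H → ℝ≥0∞) (A : H → H) (a b : ℝ) : Prop :=
  ∀ φ : H, q φ ≠ ∞ →
    ENNReal.ofReal (‖A φ‖ ^ 2) ≤
      ENNReal.ofReal (a ^ 2) * ENNReal.ofReal (‖φ‖ ^ 2) + ENNReal.ofReal (b ^ 2) * q φ

/-- `A` is `√G`-bounded. -/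
def SqrtBounded {H : Type*} [NormedAddCommGroup H] [InnerProductSpace ℂ H]
    (q : H → ℝ≥0∞) (A : H → H) : Prop :=
  ∃ a b : ℝ, 0 ≤ a ∧ 0 ≤ b ∧ SqrtRelBoundWith q A a b

/-- `A` is `√G`-infinitesimal (its `√G`-bound is zero). -/
def SqrtInfinitesimal {H : Type*} [NormedAddCommGroup H] [InnerProductSpace ℂ H]
    (q : H → ℝ≥0∞) (A : H → H) : Prop :=
  ∀ b : ℝ, 0 < b → ∃ a : ℝ, 0 ≤ a ∧ SqrtRelBoundWith q A a b

/-- The operator E-norm `‖A‖^G_E`: the supremum over finite-rank states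
`ρ = ∑ᵢ|φᵢ⟩⟨φᵢ|` with `Tr ρ G ≤ E` of `√(∑ᵢ ‖Aφᵢ‖²)`. -/
def eNorm {H : Type*} [NormedAddCommGroup H] [InnerProductSpace ℂ H]
    (q : H → ℝ≥0∞) (A : H → H) (E : ℝ) : ℝ≥0∞ :=
  ⨆ (n : ℕ) (φ : Fin n → H) (_ : ∑ i, ‖φ i‖ ^ 2 = 1)
    (_ : ∑ i, q (φ i) ≤ ENNReal.ofReal E),
    ENNReal.ofReal (Real.sqrt (∑ i, ‖A (φ i)‖ ^ 2))

/-- A Hilbert space tensor product structure: `HAR` realizes `HA ⊗ HR` via a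
bilinear map with the characteristic inner product identity and total range. -/
structure TensorStruct (HA HR HAR : Type*)
    [NormedAddCommGroup HA] [InnerProductSpace ℂ HA] [CompleteSpace HA]
    [NormedAddCommGroup HR] [InnerProductSpace ℂ HR] [CompleteSpace HR]
    [NormedAddCommGroup HAR] [InnerProductSpace ℂ HAR] [CompleteSpace HAR] where
  /-- the tensor map `(a, b) ↦ a ⊗ b` -/
  tmul : HA →L[ℂ] HR →L[ℂ] HAR
  inner_tmul : ∀ (a a' : HA) (b b' : HR),
    (inner ℂ (tmul a b) (tmul a' b') : ℂ) = (inner ℂ a a' : ℂ) * (inner ℂ b b' : ℂ)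
  total : (Submodule.span ℂ {z : HAR | ∃ a b, z = tmul a b}).topologicalClosure = ⊤

namespace TensorStruct

variable {HA HR HAR : Type*}
  [NormedAddCommGroup HA] [InnerProductSpace ℂ HA] [CompleteSpace HA]
  [NormedAddCommGroup HR] [InnerProductSpace ℂ HR] [CompleteSpace HR]
  [NormedAddCommGroup HAR] [InnerProductSpace ℂ HAR] [CompleteSpace HAR]

/-- The isometry `a ↦ a ⊗ b` (for a fixed `b`). -/
def embR (ts : TensorStruct HA HR HAR) (b : HR) : HA →L[ℂ] HAR :=
  ts.tmul.flip b

/-- The isometry `b ↦ a ⊗ b` (for a fixed `a`). -/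
def embA (ts : TensorStruct HA HR HAR) (a : HA) : HR →L[ℂ] HAR :=
  ts.tmul a

/-- The partial trace over `R` of a (trace-class) operator on `HA ⊗ HR`:
`ρ_A = ∑ⱼ (I ⊗ ⟨fⱼ|) ρ (I ⊗ |fⱼ⟩)` for an orthonormal basis `(fⱼ)` of `HR`. -/
def ptraceR (ts : TensorStruct HA HR HAR) (ρ : HAR →L[ℂ] HAR) : HA →L[ℂ] HA :=
  ∑' j : stdIndex HR,
    (ContinuousLinearMap.adjoint (ts.embR (stdBasis HR j))) ∘L ρ ∘L ts.embR (stdBasis HR j)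

/-- The partial trace over `A` of a (trace-class) operator on `HA ⊗ HR`. -/
def ptraceA (ts : TensorStruct HA HR HAR) (ρ : HAR →L[ℂ] HAR) : HR →L[ℂ] HR :=
  ∑' i : stdIndex HA,
    (ContinuousLinearMap.adjoint (ts.embA (stdBasis HA i))) ∘L ρ ∘L ts.embA (stdBasis HA i)

end TensorStruct

/-- Superoperators: linear transformations of the space of operators
(the relevant domain being the trace-class operators). -/
abbrev Superop (H : Type*) [NormedAddCommGroup H] [InnerProductSpace ℂ H] :=
  Module.End ℂ (H →L[ℂ] H)

/-- `ΦR` is (a linear extension of) the superoperator `Φ ⊗ id_R`: on operators of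
finite Schmidt rank built from finite-energy vectors it is given by the canonical
formula `Φ ⊗ id_R (∑_{ij} |φᵢ⊗ψᵢ⟩⟨φⱼ⊗ψⱼ|) = ∑_{ij} (1⊗|ψᵢ⟩) Φ(|φᵢ⟩⟨φⱼ|) (1⊗⟨ψⱼ|)`. -/
def ExtendsTensor {HA HR HAR : Type*}
    [NormedAddCommGroup HA] [InnerProductSpace ℂ HA] [CompleteSpace HA]
    [NormedAddCommGroup HR] [InnerProductSpace ℂ HR] [CompleteSpace HR]
    [NormedAddCommGroup HAR] [InnerProductSpace ℂ HAR] [CompleteSpace HAR]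
    (ts : TensorStruct HA HR HAR) (q : HA → ℝ≥0∞)
    (Φ : Superop HA) (ΦR : Superop HAR) : Prop :=
  ∀ (n : ℕ) (φ : Fin n → HA) (ψ : Fin n → HR), (∀ i, q (φ i) ≠ ∞) →
    ΦR (∑ i, ∑ j, rankOne (ts.tmul (φ i) (ψ i)) (ts.tmul (φ j) (ψ j))) =
      ∑ i, ∑ j, ts.embR (ψ i) ∘L Φ (rankOne (φ i) (φ j)) ∘L
        ContinuousLinearMap.adjoint (ts.embR (ψ j))

/-- The energy-constrained diamond norm `‖Φ‖^G_{⋄,E}` of a superoperator `Φ`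
whose tensor extension `Φ ⊗ id_R` is `ΦR`; `q` is the form of `G`. -/
def ecdNorm {HA HR HAR : Type*}
    [NormedAddCommGroup HA] [InnerProductSpace ℂ HA] [CompleteSpace HA]
    [NormedAddCommGroup HR] [InnerProductSpace ℂ HR] [CompleteSpace HR]
    [NormedAddCommGroup HAR] [InnerProductSpace ℂ HAR] [CompleteSpace HAR]
    (ts : TensorStruct HA HR HAR) (q : HA → ℝ≥0∞)
    (ΦR : Superop HAR) (E : ℝ) : ℝ≥0∞ :=
  ⨆ (ρ : HAR →L[ℂ] HAR) (_ : IsState ρ)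
    (_ : energy q (ts.ptraceR ρ) ≤ ENNReal.ofReal E),
    traceNorm (ΦR ρ)

/-- Complete positivity of a superoperator. -/
def IsCompletelyPositive {H : Type*} [NormedAddCommGroup H] [InnerProductSpace ℂ H]
    [CompleteSpace H] (Φ : Superop H) : Prop :=
  ∀ (n : ℕ) (A : Fin n → (H →L[ℂ] H)) (ξ : Fin n → H),
    0 ≤ (∑ i, ∑ j,
      (inner ℂ (ξ i) ((Φ ((ContinuousLinearMap.adjoint (A i)) ∘L (A j))) (ξ j)) : ℂ)).re ∧
    (∑ i, ∑ j,
      (inner ℂ (ξ i) ((Φ ((ContinuousLinearMap.adjoint (A i)) ∘L (A j))) (ξ j)) : ℂ)).im = 0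

/-- A quantum channel: a completely positive trace preserving superoperator. -/
def IsChannel {H : Type*} [NormedAddCommGroup H] [InnerProductSpace ℂ H]
    [CompleteSpace H] (Φ : Superop H) : Prop :=
  IsCompletelyPositive Φ ∧ ∀ ρ : H →L[ℂ] H, IsTraceClass ρ → opTrace (Φ ρ) = opTrace ρ

/-- A (strongly continuous) quantum dynamical semigroup. -/
structure IsQDS {H : Type*} [NormedAddCommGroup H] [InnerProductSpace ℂ H]
    [CompleteSpace H] (Φ : ℝ → Superop H) : Prop where
  channel : ∀ t : ℝ, 0 ≤ t → IsChannel (Φ t)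
  map_zero : Φ 0 = 1
  semigroup : ∀ s t : ℝ, 0 ≤ s → 0 ≤ t → Φ (s + t) = Φ s * Φ t
  strong_continuity : ∀ ρ : H →L[ℂ] H, IsTraceClass ρ →
    Tendsto (fun t => traceNorm (Φ t ρ - ρ)) (𝓝[>] (0 : ℝ)) (𝓝 0)

/-- `X` is the value at `ρ` of the generator of the semigroup `Φ`, i.e.
`t⁻¹(Φ_t ρ - ρ) → X` in trace norm as `t → 0⁺`; in particular `ρ` belongs to
the domain of the generator. -/
def IsGeneratorAt {H : Type*} [NormedAddCommGroup H] [InnerProductSpace ℂ H]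
    [CompleteSpace H] (Φ : ℝ → Superop H) (ρ X : H →L[ℂ] H) : Prop :=
  Tendsto (fun t : ℝ => traceNorm (((t : ℂ))⁻¹ • (Φ t ρ - ρ) - X)) (𝓝[>] (0 : ℝ)) (𝓝 0)

/-- `f E = o(g E)` as `E → +∞`, for `f` with values in `[0,∞]`. -/
def IsLittleOAtTop (f : ℝ → ℝ≥0∞) (g : ℝ → ℝ) : Prop :=
  ∀ c : ℝ, 0 < c → ∀ᶠ E in atTop, f E ≤ ENNReal.ofReal (c * g E)

/-- Pointwise trace-norm continuity of a superoperator on a set of operators. -/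
def ContinuousOnTN {H H' : Type*}
    [NormedAddCommGroup H] [InnerProductSpace ℂ H] [CompleteSpace H]
    [NormedAddCommGroup H'] [InnerProductSpace ℂ H'] [CompleteSpace H']
    (F : (H →L[ℂ] H) → (H' →L[ℂ] H')) (s : Set (H →L[ℂ] H)) : Prop :=
  ∀ ρ ∈ s, ∀ δ : ℝ, 0 < δ → ∃ ε : ℝ, 0 < ε ∧ ∀ σ ∈ s,
    traceNorm (ρ - σ) ≤ ENNReal.ofReal ε → traceNorm (F ρ - F σ) ≤ ENNReal.ofReal δ

/-- Uniform trace-norm continuity of a superoperator on a set of operators. -/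
def UniformContinuousOnTN {H H' : Type*}
    [NormedAddCommGroup H] [InnerProductSpace ℂ H] [CompleteSpace H]
    [NormedAddCommGroup H'] [InnerProductSpace ℂ H'] [CompleteSpace H']
    (F : (H →L[ℂ] H) → (H' →L[ℂ] H')) (s : Set (H →L[ℂ] H)) : Prop :=
  ∀ δ : ℝ, 0 < δ → ∃ ε : ℝ, 0 < ε ∧ ∀ ρ ∈ s, ∀ σ ∈ s,
    traceNorm (ρ - σ) ≤ ENNReal.ofReal ε → traceNorm (F ρ - F σ) ≤ ENNReal.ofReal δ

/-- The set of pure states on `HA ⊗ HR` with `Tr ρ_A G ≤ E`. -/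
def pureEnergySet {HA HR HAR : Type*}
    [NormedAddCommGroup HA] [InnerProductSpace ℂ HA] [CompleteSpace HA]
    [NormedAddCommGroup HR] [InnerProductSpace ℂ HR] [CompleteSpace HR]
    [NormedAddCommGroup HAR] [InnerProductSpace ℂ HAR] [CompleteSpace HAR]
    (ts : TensorStruct HA HR HAR) (q : HA → ℝ≥0∞) (E : ℝ) : Set (HAR →L[ℂ] HAR) :=
  {ρ | IsPureState ρ ∧ energy q (ts.ptraceR ρ) ≤ ENNReal.ofReal E}

/-- The set of positive operators `ρ` on `HA ⊗ HR` with `Tr ρ ≤ 1` and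
`Tr ρ_A G ≤ E`. -/
def subStateEnergySet {HA HR HAR : Type*}
    [NormedAddCommGroup HA] [InnerProductSpace ℂ HA] [CompleteSpace HA]
    [NormedAddCommGroup HR] [InnerProductSpace ℂ HR] [CompleteSpace HR]
    [NormedAddCommGroup HAR] [InnerProductSpace ℂ HAR] [CompleteSpace HAR]
    (ts : TensorStruct HA HR HAR) (q : HA → ℝ≥0∞) (E : ℝ) : Set (HAR →L[ℂ] HAR) :=
  {ρ | ρ.IsPositive ∧ traceNorm ρ ≤ 1 ∧ energy q (ts.ptraceR ρ) ≤ ENNReal.ofReal E}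


/-- The quadratic form of `G ⊗ I_R` on `HA ⊗ HR`, for a discrete operator
`G = ∑ₖ Eₖ|τₖ⟩⟨τₖ|`:  `‖√(G⊗I) z‖² = ∑ₖ Eₖ ‖(⟨τₖ|⊗I) z‖²`. -/
def TensorStruct.tensorForm {HA HR HAR : Type*}
    [NormedAddCommGroup HA] [InnerProductSpace ℂ HA] [CompleteSpace HA]
    [NormedAddCommGroup HR] [InnerProductSpace ℂ HR] [CompleteSpace HR]
    [NormedAddCommGroup HAR] [InnerProductSpace ℂ HAR] [CompleteSpace HAR]
    (ts : TensorStruct HA HR HAR) (τ : ℕ → HA) (Ek : ℕ → ℝ) : HAR → ℝ≥0∞ :=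
  fun z => ∑' k, ENNReal.ofReal (Ek k) *
    ENNReal.ofReal (‖(ContinuousLinearMap.adjoint (ts.embA (τ k))) z‖ ^ 2)

/-- The quantity `‖{V_k}‖^G_E`: the supremum over states `ρ = ∑ᵢ|φᵢ⟩⟨φᵢ|` with
`Tr ρ G ≤ E` of `∑ₖ Tr V_k ρ V_k*`. -/
def familyENorm {H : Type*} [NormedAddCommGroup H] [InnerProductSpace ℂ H]
    (q : H → ℝ≥0∞) (V : ℕ → H → H) (E : ℝ) : ℝ≥0∞ :=
  ⨆ (φ : ℕ → H) (_ : (∑' i, ENNReal.ofReal (‖φ i‖ ^ 2)) = 1)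
    (_ : (∑' i, q (φ i)) ≤ ENNReal.ofReal E),
    ∑' k, ∑' i, ENNReal.ofReal (‖V k (φ i)‖ ^ 2)

/-- The superoperator `ρ ↦ u ρ u*` of conjugation by `u`. -/
def conjSuper {H : Type*} [NormedAddCommGroup H] [InnerProductSpace ℂ H] [CompleteSpace H]
    (u : H →L[ℂ] H) : Superop H where
  toFun ρ := u ∘L ρ ∘L (ContinuousLinearMap.adjoint u)
  map_add' ρ σ := by
    simp [ContinuousLinearMap.comp_add, ContinuousLinearMap.add_comp]
  map_smul' c ρ := by
    simp [ContinuousLinearMap.comp_smul, ContinuousLinearMap.smul_comp]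

/-- `U` is the strongly continuous one-parameter unitary group `t ↦ e^{-iAt}`
generated by the self-adjoint operator `A`; by Stone's theorem the domain of
`A` is exactly the set of vectors at which the group is differentiable, and
there the derivative at `0` is `-iAφ`. -/
structure UnitaryGroupOf {H : Type*} [NormedAddCommGroup H] [InnerProductSpace ℂ H]
    [CompleteSpace H] (U : ℝ → H →L[ℂ] H) (A : H → H) : Prop where
  unitary_left : ∀ x : ℝ, U x ∘L ContinuousLinearMap.adjoint (U x) = 1
  unitary_right : ∀ x : ℝ, ContinuousLinearMap.adjoint (U x) ∘L U x = 1
  map_zero : U 0 = 1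
  map_add : ∀ x y : ℝ, U (x + y) = U x ∘L U y
  strong_continuity : ∀ φ : H, Continuous fun x => U x φ
  generator : ∀ φ : H, (∃ ψ : H, HasDerivAt (fun x => U x φ) ψ 0) →
    HasDerivAt (fun x => U x φ) (-(Complex.I • A φ)) 0

/-- `φ` lies in the domain of the generator `A` of the unitary group `U`. -/
def InGroupDomain {H : Type*} [NormedAddCommGroup H] [InnerProductSpace ℂ H]
    [CompleteSpace H] (U : ℝ → H →L[ℂ] H) (φ : H) : Prop :=
  ∃ ψ : H, HasDerivAt (fun x => U x φ) ψ 0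

/-- The Gaussian convolutional semigroup
`Ξ^A_t(ρ) = (2πt)^{-1/2} ∫_ℝ e^{-iAx} ρ e^{iAx} e^{-x²/(2t)} dx`
(Bochner integral), where `U x = e^{-iAx}`. -/
def gaussSemigroup {H : Type*} [NormedAddCommGroup H] [InnerProductSpace ℂ H]
    [CompleteSpace H] (U : ℝ → H →L[ℂ] H) (t : ℝ) (ρ : H →L[ℂ] H) : H →L[ℂ] H :=
  ∫ x : ℝ, (Real.exp (-(x ^ 2) / (2 * t)) / Real.sqrt (2 * Real.pi * t)) •
    (U x ∘L ρ ∘L ContinuousLinearMap.adjoint (U x))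



open scoped NNReal

/-- Pointwise bound `|l|^{2p} ≤ c^{2p} + c^{2p-2} l²` for `0 ≤ p < 1`, `c > 0`. -/
private lemma abs_rpow_le_aux {p c : ℝ} (hp0 : 0 ≤ p) (hp1 : p < 1) (hc : 0 < c) (l : ℝ) :
    |l| ^ (2 * p) ≤ c ^ (2 * p) + c ^ (2 * p - 2) * l ^ 2 := by
  rcases le_or_gt |l| c with h | h
  · have h1 : |l| ^ (2 * p) ≤ c ^ (2 * p) :=
      Real.rpow_le_rpow (abs_nonneg l) h (by positivity)
    have h2 : 0 ≤ c ^ (2 * p - 2) * l ^ 2 :=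
      mul_nonneg (Real.rpow_pos_of_pos hc _).le (sq_nonneg l)
    linarith
  · have hl : 0 < |l| := lt_trans hc h
    have e1 : |l| ^ (2 * p) = |l| ^ (2 * p - 2) * l ^ 2 := by
      rw [← sq_abs l, ← Real.rpow_two, ← Real.rpow_add hl]
      norm_num
    have h2 : |l| ^ (2 * p - 2) ≤ c ^ (2 * p - 2) :=
      Real.rpow_le_rpow_of_nonpos hc h.le (by linarith)
    have h3 : 0 < c ^ (2 * p) := Real.rpow_pos_of_pos hc _
    calc |l| ^ (2 * p) = |l| ^ (2 * p - 2) * l ^ 2 := e1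
      _ ≤ c ^ (2 * p - 2) * l ^ 2 := mul_le_mul_of_nonneg_right h2 (sq_nonneg l)
      _ ≤ c ^ (2 * p) + c ^ (2 * p - 2) * l ^ 2 := le_add_of_nonneg_left h3.le

/-- Weighted AM–GM in `ℝ≥0∞` (tangent-line form). -/
private lemma ennreal_amgm_aux {p : ℝ} (hp : 0 < p) (hp1 : p ≤ 1)
    {S : ℝ≥0∞} (hS0 : S ≠ 0) (hST : S ≠ ∞) (t : ℝ≥0∞) :
    t ^ p * S ^ (1 - p) ≤ ENNReal.ofReal p * t + ENNReal.ofReal (1 - p) * S := by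
  rcases eq_or_ne t ∞ with rfl | ht
  · have h3 : ENNReal.ofReal p ≠ 0 := by
      simp only [ne_eq, ENNReal.ofReal_eq_zero, not_le]; exact hp
    rw [ENNReal.mul_top h3]
    exact le_top.trans le_self_add
  · lift t to ℝ≥0 using ht
    lift S to ℝ≥0 using hST
    have e1 : (p.toNNReal : ℝ) = p := Real.coe_toNNReal _ hp.le
    have e2 : ((1 - p).toNNReal : ℝ) = 1 - p := Real.coe_toNNReal _ (by linarith)
    have hsum : p.toNNReal + (1 - p).toNNReal = 1 := by
      rw [← Real.toNNReal_add hp.le (by linarith)]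
      norm_num
    have key := NNReal.geom_mean_le_arith_mean2_weighted p.toNNReal (1 - p).toNNReal t S hsum
    rw [e1, e2] at key
    calc (t : ℝ≥0∞) ^ p * (S : ℝ≥0∞) ^ (1 - p)
        = ((t ^ p * S ^ (1 - p) : ℝ≥0) : ℝ≥0∞) := by
          rw [ENNReal.coe_mul, ENNReal.coe_rpow_of_nonneg _ hp.le,
            ENNReal.coe_rpow_of_nonneg _ (by linarith : (0:ℝ) ≤ 1 - p)]
      _ ≤ ((p.toNNReal * t + (1 - p).toNNReal * S : ℝ≥0) : ℝ≥0∞) := ENNReal.coe_le_coe.mpr key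
      _ = ENNReal.ofReal p * t + ENNReal.ofReal (1 - p) * S := by
          rw [ENNReal.coe_add, ENNReal.coe_mul, ENNReal.coe_mul]
          rfl

/-- Jensen's inequality for `x ↦ x^p`, `0 ≤ p ≤ 1`, w.r.t. a probability measure. -/
private lemma lintegral_rpow_le_rpow_aux {ν : MeasureTheory.Measure ℝ} (hν : ν Set.univ = 1)
    {f : ℝ → ℝ≥0∞} (hf : Measurable f) {p : ℝ} (hp0 : 0 ≤ p) (hp1 : p ≤ 1) :
    ∫⁻ x, f x ^ p ∂ν ≤ (∫⁻ x, f x ∂ν) ^ p := by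
  rcases hp0.eq_or_lt with rfl | hp
  · simp [ENNReal.rpow_zero, MeasureTheory.lintegral_one, hν]
  have hmeas : Measurable fun x => f x ^ p := ENNReal.continuous_rpow_const.measurable.comp hf
  rcases eq_or_ne (∫⁻ x, f x ∂ν) 0 with h0 | h0
  · have hf0 : f =ᵐ[ν] 0 := (MeasureTheory.lintegral_eq_zero_iff hf).mp h0
    have hz : ∫⁻ x, f x ^ p ∂ν = 0 := by
      rw [MeasureTheory.lintegral_eq_zero_iff hmeas]
      filter_upwards [hf0] with x hx
      simp only [Pi.zero_apply] at hx ⊢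
      rw [hx, ENNReal.zero_rpow_of_pos hp]
    simp [hz]
  rcases eq_or_ne (∫⁻ x, f x ∂ν) ∞ with hT | hT
  · rw [hT, ENNReal.top_rpow_of_pos hp]
    exact le_top
  set S := ∫⁻ x, f x ∂ν with hS
  have key : (∫⁻ x, f x ^ p ∂ν) * S ^ (1 - p) ≤ S := by
    calc (∫⁻ x, f x ^ p ∂ν) * S ^ (1 - p)
        = ∫⁻ x, f x ^ p * S ^ (1 - p) ∂ν := (MeasureTheory.lintegral_mul_const _ hmeas).symm
      _ ≤ ∫⁻ x, (ENNReal.ofReal p * f x + ENNReal.ofReal (1 - p) * S) ∂ν :=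
          MeasureTheory.lintegral_mono fun x => ennreal_amgm_aux hp hp1 h0 hT (f x)
      _ = ENNReal.ofReal p * S + ENNReal.ofReal (1 - p) * S * (ν Set.univ) := by
          rw [MeasureTheory.lintegral_add_left (hf.const_mul _),
            MeasureTheory.lintegral_const_mul _ hf, MeasureTheory.lintegral_const]
      _ = (ENNReal.ofReal p + ENNReal.ofReal (1 - p)) * S := by rw [hν]; ring
      _ = S := by
          rw [← ENNReal.ofReal_add hp.le (by linarith), show p + (1 - p) = 1 by ring,
            ENNReal.ofReal_one, one_mul]
  calc ∫⁻ x, f x ^ p ∂ν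
      = (∫⁻ x, f x ^ p ∂ν) * S ^ (1 - p) * S ^ (p - 1) := by
        rw [mul_assoc, ← ENNReal.rpow_add _ _ h0 hT, show (1 - p) + (p - 1) = 0 by ring,
          ENNReal.rpow_zero, mul_one]
    _ ≤ S * S ^ (p - 1) := mul_le_mul_left key _
    _ = S ^ p := by
        rw [show S * S ^ (p - 1) = S ^ (1:ℝ) * S ^ (p - 1) by rw [ENNReal.rpow_one],
          ← ENNReal.rpow_add _ _ h0 hT, show (1:ℝ) + (p - 1) = p by ring]

/-- Lemma 5.  Let `A` be a self-adjoint operator (encoded by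
the family `μ` of its diagonal spectral measures, `μ φ = ⟨φ, P_A(·) φ⟩`) which
is `√G`-bounded.  Then for `p ∈ [0,1)` the operator `|A|^p` (given by the
spectral calculus of `A`, so that `‖|A|^p φ‖² = ∫ |λ|^{2p} dμ_φ`) is
`√G`-infinitesimal and `‖A^p‖^G_E ≤ (‖A‖^G_E)^p` for all `E > 0`. -/
theorem pow_sqrtG_infinitesimal_of_sqrtG_bounded
    {H : Type} [NormedAddCommGroup H] [InnerProductSpace ℂ H] [CompleteSpace H]
    [TopologicalSpace.SeparableSpace H]
    (hinf : ¬ FiniteDimensional ℂ H)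
    (G : PosForm H)
    (hG0 : ∀ ε : ℝ, 0 < ε → ∃ φ : H, ‖φ‖ = 1 ∧ G.q φ < ENNReal.ofReal ε)
    (μ : H → MeasureTheory.Measure ℝ)
    (hμ_univ : ∀ φ : H, μ φ Set.univ = ENNReal.ofReal (‖φ‖ ^ 2))
    (hμ_smul : ∀ (c : ℂ) (φ : H) (s : Set ℝ),
      μ (c • φ) s = ENNReal.ofReal (‖c‖ ^ 2) * μ φ s)
    (hμ_par : ∀ (φ ψ : H) (s : Set ℝ), MeasurableSet s →
      μ (φ + ψ) s + μ (φ - ψ) s = 2 * μ φ s + 2 * μ ψ s)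
    (A : H → H)
    (hA : ∀ φ : H, (∫⁻ l, ENNReal.ofReal (l ^ 2) ∂(μ φ)) ≠ ∞ →
      ENNReal.ofReal (‖A φ‖ ^ 2) = ∫⁻ l, ENNReal.ofReal (l ^ 2) ∂(μ φ))
    (hdom : ∀ φ : H, G.q φ ≠ ∞ → (∫⁻ l, ENNReal.ofReal (l ^ 2) ∂(μ φ)) ≠ ∞)
    (hbound : SqrtBounded G.q A)
    (p : ℝ) (hp0 : 0 ≤ p) (hp1 : p < 1)
    (Ap : H → H)
    (hAp : ∀ φ : H, (∫⁻ l, ENNReal.ofReal (|l| ^ (2 * p)) ∂(μ φ)) ≠ ∞ →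
      ENNReal.ofReal (‖Ap φ‖ ^ 2) = ∫⁻ l, ENNReal.ofReal (|l| ^ (2 * p)) ∂(μ φ)) :
    SqrtInfinitesimal G.q Ap ∧
      ∀ E : ℝ, 0 < E → eNorm G.q Ap E ≤ (eNorm G.q A E) ^ p := by
  obtain ⟨a0, b0, ha0, hb0, hrel⟩ := hbound
  have hmeas2 : Measurable fun l : ℝ => ENNReal.ofReal (l ^ 2) :=
    ENNReal.measurable_ofReal.comp (continuous_pow 2).measurable
  have hfp_eq : ∀ l : ℝ, ENNReal.ofReal (|l| ^ (2 * p)) = ENNReal.ofReal (l ^ 2) ^ p := by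
    intro l
    have h : |l| ^ (2 * p) = (l ^ 2) ^ p := by
      rw [Real.rpow_mul (abs_nonneg l), Real.rpow_two, sq_abs]
    rw [h, ENNReal.ofReal_rpow_of_nonneg (sq_nonneg l) hp0]
  constructor
  · -- √G-infinitesimality
    intro b hb
    set c : ℝ := (b ^ 2 / (b0 ^ 2 + 1)) ^ ((2 * p - 2)⁻¹) with hc_def
    have hbase : 0 < b ^ 2 / (b0 ^ 2 + 1) := by positivity
    have hc : 0 < c := Real.rpow_pos_of_pos hbase _
    have hexp : 2 * p - 2 ≠ 0 := by intro h; linarith [h]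
    have hcc : c ^ (2 * p - 2) = b ^ 2 / (b0 ^ 2 + 1) := by
      rw [hc_def, ← Real.rpow_mul hbase.le, inv_mul_cancel₀ hexp, Real.rpow_one]
    have hcb : c ^ (2 * p - 2) * b0 ^ 2 ≤ b ^ 2 := by
      rw [hcc, div_mul_eq_mul_div, div_le_iff₀ (by positivity)]
      nlinarith [sq_nonneg b, sq_nonneg b0]
    have hs_nonneg : 0 ≤ c ^ (2 * p) + c ^ (2 * p - 2) * a0 ^ 2 := by
      have h1 : 0 < c ^ (2 * p) := Real.rpow_pos_of_pos hc _
      have h2 : 0 ≤ c ^ (2 * p - 2) * a0 ^ 2 :=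
        mul_nonneg (Real.rpow_pos_of_pos hc _).le (sq_nonneg _)
      linarith
    refine ⟨Real.sqrt (c ^ (2 * p) + c ^ (2 * p - 2) * a0 ^ 2), Real.sqrt_nonneg _, ?_⟩
    intro φ hφ
    have hI : (∫⁻ l, ENNReal.ofReal (l ^ 2) ∂(μ φ)) ≠ ∞ := hdom φ hφ
    have hIle : (∫⁻ l, ENNReal.ofReal (l ^ 2) ∂(μ φ)) ≤
        ENNReal.ofReal (a0 ^ 2) * ENNReal.ofReal (‖φ‖ ^ 2) + ENNReal.ofReal (b0 ^ 2) * G.q φ := by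
      rw [← hA φ hI]; exact hrel φ hφ
    have hJle : (∫⁻ l, ENNReal.ofReal (|l| ^ (2 * p)) ∂(μ φ)) ≤
        ENNReal.ofReal (c ^ (2 * p)) * ENNReal.ofReal (‖φ‖ ^ 2)
          + ENNReal.ofReal (c ^ (2 * p - 2)) * ∫⁻ l, ENNReal.ofReal (l ^ 2) ∂(μ φ) := by
      calc (∫⁻ l, ENNReal.ofReal (|l| ^ (2 * p)) ∂(μ φ))
          ≤ ∫⁻ l, (ENNReal.ofReal (c ^ (2 * p))
              + ENNReal.ofReal (c ^ (2 * p - 2)) * ENNReal.ofReal (l ^ 2)) ∂(μ φ) := by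
            refine MeasureTheory.lintegral_mono fun l => ?_
            rw [← ENNReal.ofReal_mul (Real.rpow_pos_of_pos hc _).le,
              ← ENNReal.ofReal_add (Real.rpow_pos_of_pos hc _).le
                (mul_nonneg (Real.rpow_pos_of_pos hc _).le (sq_nonneg l))]
            exact ENNReal.ofReal_le_ofReal (abs_rpow_le_aux hp0 hp1 hc l)
        _ = ENNReal.ofReal (c ^ (2 * p)) * ENNReal.ofReal (‖φ‖ ^ 2)
              + ENNReal.ofReal (c ^ (2 * p - 2)) * ∫⁻ l, ENNReal.ofReal (l ^ 2) ∂(μ φ) := by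
            rw [MeasureTheory.lintegral_add_left measurable_const,
              MeasureTheory.lintegral_const, MeasureTheory.lintegral_const_mul _ hmeas2,
              hμ_univ]
    have hcomb : (∫⁻ l, ENNReal.ofReal (|l| ^ (2 * p)) ∂(μ φ)) ≤
        ENNReal.ofReal (c ^ (2 * p) + c ^ (2 * p - 2) * a0 ^ 2) * ENNReal.ofReal (‖φ‖ ^ 2)
          + ENNReal.ofReal (b ^ 2) * G.q φ := by
      refine hJle.trans ?_
      calc ENNReal.ofReal (c ^ (2 * p)) * ENNReal.ofReal (‖φ‖ ^ 2)
            + ENNReal.ofReal (c ^ (2 * p - 2)) * ∫⁻ l, ENNReal.ofReal (l ^ 2) ∂(μ φ)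
          ≤ ENNReal.ofReal (c ^ (2 * p)) * ENNReal.ofReal (‖φ‖ ^ 2)
            + ENNReal.ofReal (c ^ (2 * p - 2)) *
              (ENNReal.ofReal (a0 ^ 2) * ENNReal.ofReal (‖φ‖ ^ 2)
                + ENNReal.ofReal (b0 ^ 2) * G.q φ) :=
            add_le_add_right (mul_le_mul_right hIle _) _
        _ = ENNReal.ofReal (c ^ (2 * p) + c ^ (2 * p - 2) * a0 ^ 2) * ENNReal.ofReal (‖φ‖ ^ 2)
            + ENNReal.ofReal (c ^ (2 * p - 2) * b0 ^ 2) * G.q φ := by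
            rw [ENNReal.ofReal_add (Real.rpow_pos_of_pos hc _).le
                (mul_nonneg (Real.rpow_pos_of_pos hc _).le (sq_nonneg _)),
              ENNReal.ofReal_mul (Real.rpow_pos_of_pos hc _).le,
              ENNReal.ofReal_mul (Real.rpow_pos_of_pos hc _).le]
            ring
        _ ≤ ENNReal.ofReal (c ^ (2 * p) + c ^ (2 * p - 2) * a0 ^ 2) * ENNReal.ofReal (‖φ‖ ^ 2)
            + ENNReal.ofReal (b ^ 2) * G.q φ :=
            add_le_add_right (mul_le_mul_left (ENNReal.ofReal_le_ofReal hcb) _) _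
    have hRHS_ne : ENNReal.ofReal (c ^ (2 * p) + c ^ (2 * p - 2) * a0 ^ 2)
          * ENNReal.ofReal (‖φ‖ ^ 2) + ENNReal.ofReal (b ^ 2) * G.q φ ≠ ∞ :=
      ENNReal.add_ne_top.mpr ⟨ENNReal.mul_ne_top ENNReal.ofReal_ne_top ENNReal.ofReal_ne_top,
        ENNReal.mul_ne_top ENNReal.ofReal_ne_top hφ⟩
    have hJfin : (∫⁻ l, ENNReal.ofReal (|l| ^ (2 * p)) ∂(μ φ)) ≠ ∞ :=
      ne_top_of_le_ne_top hRHS_ne hcomb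
    rw [hAp φ hJfin, Real.sq_sqrt hs_nonneg]
    exact hcomb
  · -- operator E-norm bound
    intro E hE
    unfold eNorm
    refine iSup_le fun n => iSup_le fun φ => iSup_le fun hnorm => iSup_le fun henergy => ?_
    have hqi : ∀ i, G.q (φ i) ≠ ∞ := by
      intro i
      have h1 : G.q (φ i) ≤ ∑ j, G.q (φ j) :=
        Finset.single_le_sum (f := fun j => G.q (φ j)) (fun j _ => zero_le)
          (Finset.mem_univ i)
      exact ne_top_of_le_ne_top ENNReal.ofReal_ne_top (h1.trans henergy)
    have hAi : ∀ i, ENNReal.ofReal (‖A (φ i)‖ ^ 2) = ∫⁻ l, ENNReal.ofReal (l ^ 2) ∂(μ (φ i)) :=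
      fun i => hA _ (hdom _ (hqi i))
    set ν : MeasureTheory.Measure ℝ := ∑ i, μ (φ i) with hν_def
    have hν_univ : ν Set.univ = 1 := by
      rw [hν_def, MeasureTheory.Measure.finset_sum_apply]
      rw [Finset.sum_congr rfl fun i _ => hμ_univ (φ i),
        ← ENNReal.ofReal_sum_of_nonneg fun i _ => sq_nonneg _, hnorm, ENNReal.ofReal_one]
    have hS : (∫⁻ l, ENNReal.ofReal (l ^ 2) ∂ν) = ENNReal.ofReal (∑ i, ‖A (φ i)‖ ^ 2) := by
      rw [hν_def, MeasureTheory.lintegral_finset_sum_measure,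
        ENNReal.ofReal_sum_of_nonneg fun i _ => sq_nonneg _]
      exact Finset.sum_congr rfl fun i _ => (hAi i).symm
    have hS_ne : (∫⁻ l, ENNReal.ofReal (l ^ 2) ∂ν) ≠ ∞ := by
      rw [hS]; exact ENNReal.ofReal_ne_top
    have hJensen : (∫⁻ l, ENNReal.ofReal (|l| ^ (2 * p)) ∂ν) ≤
        (∫⁻ l, ENNReal.ofReal (l ^ 2) ∂ν) ^ p := by
      calc (∫⁻ l, ENNReal.ofReal (|l| ^ (2 * p)) ∂ν)
          = ∫⁻ l, ENNReal.ofReal (l ^ 2) ^ p ∂ν :=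
            MeasureTheory.lintegral_congr fun l => hfp_eq l
        _ ≤ _ := lintegral_rpow_le_rpow_aux hν_univ hmeas2 hp0 hp1.le
    have hT_ne : (∫⁻ l, ENNReal.ofReal (|l| ^ (2 * p)) ∂ν) ≠ ∞ :=
      ne_top_of_le_ne_top (ENNReal.rpow_ne_top_of_nonneg hp0 hS_ne) hJensen
    have hT_sum : (∫⁻ l, ENNReal.ofReal (|l| ^ (2 * p)) ∂ν)
        = ∑ i, ∫⁻ l, ENNReal.ofReal (|l| ^ (2 * p)) ∂(μ (φ i)) := by
      rw [hν_def, MeasureTheory.lintegral_finset_sum_measure]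
    have hTi_ne : ∀ i, (∫⁻ l, ENNReal.ofReal (|l| ^ (2 * p)) ∂(μ (φ i))) ≠ ∞ := by
      intro i
      have h1 : (∫⁻ l, ENNReal.ofReal (|l| ^ (2 * p)) ∂(μ (φ i))) ≤
          ∑ j, ∫⁻ l, ENNReal.ofReal (|l| ^ (2 * p)) ∂(μ (φ j)) :=
        Finset.single_le_sum (f := fun j => ∫⁻ l, ENNReal.ofReal (|l| ^ (2 * p)) ∂(μ (φ j)))
          (fun j _ => zero_le) (Finset.mem_univ i)
      rw [← hT_sum] at h1
      exact ne_top_of_le_ne_top hT_ne h1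
    have hApT : ENNReal.ofReal (∑ i, ‖Ap (φ i)‖ ^ 2)
        = ∫⁻ l, ENNReal.ofReal (|l| ^ (2 * p)) ∂ν := by
      rw [hT_sum, ENNReal.ofReal_sum_of_nonneg fun i _ => sq_nonneg _]
      exact Finset.sum_congr rfl fun i _ => hAp _ (hTi_ne i)
    have hmemA : ENNReal.ofReal (Real.sqrt (∑ i, ‖A (φ i)‖ ^ 2)) ≤ eNorm G.q A E :=
      le_iSup_of_le n (le_iSup_of_le φ (le_iSup_of_le hnorm (le_iSup_of_le henergy le_rfl)))
    calc ENNReal.ofReal (Real.sqrt (∑ i, ‖Ap (φ i)‖ ^ 2))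
        = (ENNReal.ofReal (∑ i, ‖Ap (φ i)‖ ^ 2)) ^ (1 / 2 : ℝ) := by
          rw [Real.sqrt_eq_rpow,
            ENNReal.ofReal_rpow_of_nonneg (Finset.sum_nonneg fun i _ => sq_nonneg _)
              (by norm_num)]
      _ ≤ ((∫⁻ l, ENNReal.ofReal (l ^ 2) ∂ν) ^ p) ^ (1 / 2 : ℝ) := by
          rw [hApT]
          exact ENNReal.rpow_le_rpow hJensen (by norm_num)
      _ = ((∫⁻ l, ENNReal.ofReal (l ^ 2) ∂ν) ^ (1 / 2 : ℝ)) ^ p := by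
          rw [← ENNReal.rpow_mul, ← ENNReal.rpow_mul, mul_comm]
      _ = (ENNReal.ofReal (Real.sqrt (∑ i, ‖A (φ i)‖ ^ 2))) ^ p := by
          rw [hS, Real.sqrt_eq_rpow,
            ENNReal.ofReal_rpow_of_nonneg (Finset.sum_nonneg fun i _ => sq_nonneg _)
              (by norm_num)]
      _ ≤ (eNorm G.q A E) ^ p := ENNReal.rpow_le_rpow hmemA hp0


end
end

section
/- Let A be a self-adjoint operator on H with D(√G) ⊆ D(A). If Tr ρA² is finite for every state ρ with finite energy Tr ρG, then the operator A is √G-bounded. -/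
/-! # Common infrastructure for formalizing
"Energy-constrained diamond norms and quantum dynamical semigroups"
(Shirokov–Holevo).

Trace-class operators on a Hilbert space `H` are modelled as bounded operators
with finite trace norm, the trace norm being given by its variational
characterization over finite orthonormal systems.  Unbounded positive operators
`G` are modelled through their quadratic forms `φ ↦ ‖√G φ‖²` (with value `∞`
off the form domain); discrete operators are given concretely by an
orthonormal eigenbasis and eigenvalues.  The Hilbert tensor product
`H_A ⊗ H_R` is modelled by a Hilbert space `HAR` together with a bilinear map
satisfying the characteristic inner-product identity and totality. -/

noncomputable section

open scoped ENNReal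
open ContinuousLinearMap MeasureTheory Filter Topology

/-- Auxiliary: `∑ₙ 1/(2(n+1)²) ≤ 1` in `ℝ≥0∞`. -/
lemma aux_tsum_inv_sq_le_one :
    (∑' n : ℕ, ENNReal.ofReal ((2 * ((n : ℝ) + 1) ^ 2)⁻¹)) ≤ 1 := by
  have hle : ∀ n : ℕ, (2 * ((n : ℝ) + 1) ^ 2)⁻¹ ≤ ((n : ℝ) + 1)⁻¹ - ((n : ℝ) + 2)⁻¹ := by
    intro n
    have h1 : (0:ℝ) < (n : ℝ) + 1 := by positivity
    have h2 : (0:ℝ) < (n : ℝ) + 2 := by positivity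
    have hrw : ((n : ℝ) + 1)⁻¹ - ((n : ℝ) + 2)⁻¹ = (((n : ℝ) + 1) * ((n : ℝ) + 2))⁻¹ := by
      field_simp
      ring
    rw [hrw]
    apply inv_anti₀ (by positivity)
    nlinarith
  rw [ENNReal.tsum_eq_iSup_sum]
  apply iSup_le
  intro s
  obtain ⟨N, hN⟩ : ∃ N : ℕ, s ⊆ Finset.range N := by
    rcases s.exists_nat_subset_range with ⟨N, hN⟩
    exact ⟨N, hN⟩
  calc ∑ n ∈ s, ENNReal.ofReal ((2 * ((n : ℝ) + 1) ^ 2)⁻¹)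
      ≤ ∑ n ∈ Finset.range N, ENNReal.ofReal ((2 * ((n : ℝ) + 1) ^ 2)⁻¹) :=
        Finset.sum_le_sum_of_subset hN
    _ = ENNReal.ofReal (∑ n ∈ Finset.range N, (2 * ((n : ℝ) + 1) ^ 2)⁻¹) :=
        (ENNReal.ofReal_sum_of_nonneg (fun i _ => by positivity)).symm
    _ ≤ ENNReal.ofReal 1 := by
        apply ENNReal.ofReal_le_ofReal
        calc ∑ n ∈ Finset.range N, (2 * ((n : ℝ) + 1) ^ 2)⁻¹
            ≤ ∑ n ∈ Finset.range N, (((n : ℝ) + 1)⁻¹ - ((n : ℝ) + 2)⁻¹) :=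
              Finset.sum_le_sum (fun i _ => hle i)
          _ = ((0 : ℕ) + 1 : ℝ)⁻¹ - ((N : ℝ) + 1)⁻¹ := by
              have := Finset.sum_range_sub' (fun i : ℕ => ((i : ℝ) + 1)⁻¹) N
              beta_reduce at this
              rw [← this]
              apply Finset.sum_congr rfl
              intro i _
              push_cast
              ring_nf
          _ ≤ 1 := by
              have : (0:ℝ) ≤ ((N : ℝ) + 1)⁻¹ := by positivity
              norm_num
              linarith
    _ = 1 := ENNReal.ofReal_one

/-- Lemma 6.  If `A` is a self-adjoint operator with
`D(√G) ⊆ D(A)` such that `Tr ρ A² = ∑ᵢ ‖A φᵢ‖² < ∞` for every state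
`ρ = ∑ᵢ |φᵢ⟩⟨φᵢ|` with finite energy `Tr ρ G = ∑ᵢ ‖√G φᵢ‖²`, then `A` is
`√G`-bounded. -/
theorem sqrtG_bounded_of_finite_second_moment
    {H : Type} [NormedAddCommGroup H] [InnerProductSpace ℂ H] [CompleteSpace H]
    [TopologicalSpace.SeparableSpace H]
    (hinf : ¬ FiniteDimensional ℂ H)
    (G : PosForm H)
    (hG0 : ∀ ε : ℝ, 0 < ε → ∃ φ : H, ‖φ‖ = 1 ∧ G.q φ < ENNReal.ofReal ε)
    (A : H → H)
    (hadd : ∀ φ ψ : H, G.q φ ≠ ∞ → G.q ψ ≠ ∞ → A (φ + ψ) = A φ + A ψ)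
    (hsmul : ∀ (c : ℂ) (φ : H), G.q φ ≠ ∞ → A (c • φ) = c • A φ)
    (hsym : ∀ φ ψ : H, G.q φ ≠ ∞ → G.q ψ ≠ ∞ →
      (inner ℂ (A φ) ψ : ℂ) = inner ℂ φ (A ψ))
    (hfin : ∀ φ : ℕ → H, (∑' i, ENNReal.ofReal (‖φ i‖ ^ 2)) = 1 →
      (∑' i, G.q (φ i)) ≠ ∞ → (∑' i, ENNReal.ofReal (‖A (φ i)‖ ^ 2)) ≠ ∞) :
    SqrtBounded G.q A := by
  by_contra hnb
  -- a unit vector with finite form value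
  obtain ⟨e, he1, heq⟩ := hG0 1 one_pos
  have heq' : G.q e ≠ ∞ := heq.ne_top
  have hA0 : A 0 = 0 := by
    have h := hsmul 0 e heq'
    simpa using h
  -- bad vectors for each n
  have hbad : ∀ n : ℕ, ∃ ϕ : H, G.q ϕ ≠ ∞ ∧
      ENNReal.ofReal (((n : ℝ) + 1) ^ 2) * ENNReal.ofReal (‖ϕ‖ ^ 2)
        + ENNReal.ofReal (((n : ℝ) + 1) ^ 2) * G.q ϕ < ENNReal.ofReal (‖A ϕ‖ ^ 2) := by
    intro n
    by_contra hcon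
    push_neg at hcon
    exact hnb ⟨(n : ℝ) + 1, (n : ℝ) + 1, by positivity, by positivity,
      fun ϕ hϕ => hcon ϕ hϕ⟩
  choose φ hφq hφlt using hbad
  set Q : ℕ → ℝ := fun n => (G.q (φ n)).toReal with hQdef
  have hQnn : ∀ n, 0 ≤ Q n := fun n => ENNReal.toReal_nonneg
  set d : ℕ → ℝ := fun n => ‖φ n‖ ^ 2 + Q n with hddef
  have hdnn : ∀ n, 0 ≤ d n := fun n => by
    have := hQnn n; have : (0:ℝ) ≤ ‖φ n‖ ^ 2 := by positivity
    simp only [hddef]; nlinarith [hQnn n]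
  -- real form of the inequality
  have hlt : ∀ n : ℕ, ((n : ℝ) + 1) ^ 2 * d n < ‖A (φ n)‖ ^ 2 := by
    intro n
    have h1 : G.q (φ n) = ENNReal.ofReal (Q n) := (ENNReal.ofReal_toReal (hφq n)).symm
    have h2 := hφlt n
    rw [h1, ← ENNReal.ofReal_mul (by positivity), ← ENNReal.ofReal_mul (by positivity),
      ← ENNReal.ofReal_add (by positivity) (by positivity)] at h2
    have h3 := (ENNReal.ofReal_lt_ofReal_iff_of_nonneg (by positivity)).mp h2
    have h4 : ((n : ℝ) + 1) ^ 2 * d n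
        = ((n : ℝ) + 1) ^ 2 * ‖φ n‖ ^ 2 + ((n : ℝ) + 1) ^ 2 * Q n := by
      simp only [hddef]; ring
    linarith
  -- positivity of d
  have hd : ∀ n, 0 < d n := by
    intro n
    rcases (hdnn n).lt_or_eq with h | h
    · exact h
    · exfalso
      have hφ0 : φ n = 0 := by
        have hn2 : ‖φ n‖ ^ 2 = 0 := by
          have := hQnn n
          have h' : ‖φ n‖ ^ 2 + Q n = 0 := by
            have : d n = 0 := h.symm
            simpa [hddef] using this
          nlinarith [sq_nonneg ‖φ n‖]
        have : ‖φ n‖ = 0 := by nlinarith [norm_nonneg (φ n)]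
        exact norm_eq_zero.mp this
      have h5 := hlt n
      rw [hφ0, hA0] at h5
      have : ((n : ℝ) + 1) ^ 2 * d n < 0 := by simpa using h5
      nlinarith [hdnn n]
  -- the scaling coefficients
  set c : ℕ → ℝ := fun n => (Real.sqrt (2 * ((n : ℝ) + 1) ^ 2 * d n))⁻¹ with hcdef
  have hcpos : ∀ n, 0 < c n := fun n =>
    inv_pos.mpr (Real.sqrt_pos.mpr (by have := hd n; positivity))
  have hc2 : ∀ n, c n ^ 2 = (2 * ((n : ℝ) + 1) ^ 2 * d n)⁻¹ := by
    intro n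
    simp only [hcdef]
    rw [inv_pow, Real.sq_sqrt (by have := hd n; positivity)]
  set ψ : ℕ → H := fun n => ((c n : ℂ)) • φ n with hψdef
  have hψnorm : ∀ n, ‖ψ n‖ ^ 2 = c n ^ 2 * ‖φ n‖ ^ 2 := by
    intro n
    simp only [hψdef, norm_smul, Complex.norm_real, Real.norm_eq_abs,
      abs_of_pos (hcpos n), mul_pow]
  have hψq : ∀ n, G.q (ψ n) = ENNReal.ofReal (c n ^ 2 * Q n) := by
    intro n
    simp only [hψdef]
    rw [G.q_smul, (ENNReal.ofReal_toReal (hφq n)).symm,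
      ← ENNReal.ofReal_mul (by positivity)]
    congr 1
    rw [Complex.norm_real, Real.norm_eq_abs, sq_abs]
  have hψqne : ∀ n, G.q (ψ n) ≠ ∞ := fun n => by rw [hψq n]; exact ENNReal.ofReal_ne_top
  have hAψ : ∀ n, ‖A (ψ n)‖ ^ 2 = c n ^ 2 * ‖A (φ n)‖ ^ 2 := by
    intro n
    simp only [hψdef]
    rw [hsmul _ _ (hφq n), norm_smul, Complex.norm_real, Real.norm_eq_abs,
      abs_of_pos (hcpos n), mul_pow]
  -- each term ‖A ψ n‖² exceeds 1/2
  have hhalf : ∀ n, (1:ℝ) / 2 < ‖A (ψ n)‖ ^ 2 := by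
    intro n
    have hane : ((n : ℝ) + 1) ^ 2 * d n ≠ 0 := mul_ne_zero (by positivity) (hd n).ne'
    have h1 : c n ^ 2 * (((n : ℝ) + 1) ^ 2 * d n) = 1 / 2 := by
      rw [hc2 n,
        show (2 * ((n : ℝ) + 1) ^ 2 * d n) = 2 * (((n : ℝ) + 1) ^ 2 * d n) from by ring,
        mul_inv, mul_assoc, inv_mul_cancel₀ hane, mul_one]
      norm_num
    have h2 : c n ^ 2 * (((n : ℝ) + 1) ^ 2 * d n) < c n ^ 2 * ‖A (φ n)‖ ^ 2 :=
      mul_lt_mul_of_pos_left (hlt n) (pow_pos (hcpos n) 2)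
    rw [hAψ n, ← h1]
    exact h2
  -- weight of each ψ n
  have hwt : ∀ n, c n ^ 2 * d n = (2 * ((n : ℝ) + 1) ^ 2)⁻¹ := by
    intro n
    rw [hc2 n, mul_inv, mul_assoc, inv_mul_cancel₀ (hd n).ne', mul_one]
  have hterm : ∀ n, ENNReal.ofReal (‖ψ n‖ ^ 2) + G.q (ψ n)
      = ENNReal.ofReal ((2 * ((n : ℝ) + 1) ^ 2)⁻¹) := by
    intro n
    rw [hψnorm n, hψq n, ← ENNReal.ofReal_add (by positivity) (by positivity),
      ← hwt n]
    congr 1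
    simp only [hddef]
    ring
  -- the sums
  have hWle : (∑' n, (ENNReal.ofReal (‖ψ n‖ ^ 2) + G.q (ψ n))) ≤ 1 := by
    calc (∑' n, (ENNReal.ofReal (‖ψ n‖ ^ 2) + G.q (ψ n)))
        = ∑' n : ℕ, ENNReal.ofReal ((2 * ((n : ℝ) + 1) ^ 2)⁻¹) := by
          exact tsum_congr hterm
      _ ≤ 1 := aux_tsum_inv_sq_le_one
  have hsplit : (∑' n, (ENNReal.ofReal (‖ψ n‖ ^ 2) + G.q (ψ n)))
      = (∑' n, ENNReal.ofReal (‖ψ n‖ ^ 2)) + ∑' n, G.q (ψ n) := ENNReal.tsum_add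
  have hSle : (∑' n, ENNReal.ofReal (‖ψ n‖ ^ 2)) ≤ 1 :=
    le_trans (le_trans le_self_add (le_of_eq hsplit.symm)) hWle
  have hVle : (∑' n, G.q (ψ n)) ≤ 1 :=
    le_trans (le_trans le_add_self (le_of_eq hsplit.symm)) hWle
  have hSne : (∑' n, ENNReal.ofReal (‖ψ n‖ ^ 2)) ≠ ∞ :=
    (lt_of_le_of_lt hSle ENNReal.one_lt_top).ne
  have hVne : (∑' n, G.q (ψ n)) ≠ ∞ := (lt_of_le_of_lt hVle ENNReal.one_lt_top).ne
  set s : ℝ := (∑' n, ENNReal.ofReal (‖ψ n‖ ^ 2)).toReal with hsdef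
  have hsS : (∑' n, ENNReal.ofReal (‖ψ n‖ ^ 2)) = ENNReal.ofReal s :=
    (ENNReal.ofReal_toReal hSne).symm
  have hsnn : 0 ≤ s := ENNReal.toReal_nonneg
  have hsle : s ≤ 1 := by
    have := ENNReal.toReal_mono (by simp : (1 : ℝ≥0∞) ≠ ∞) hSle
    simpa [hsdef] using this
  -- the full sequence with padding
  set r : ℝ := Real.sqrt (1 - s) with hrdef
  have hr2 : r ^ 2 = 1 - s := Real.sq_sqrt (by linarith)
  have hrnn : 0 ≤ r := Real.sqrt_nonneg _
  set φ' : ℕ → H := fun i => Nat.casesOn i (((r : ℂ)) • e) ψ with hφ'def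
  have hφ'0 : φ' 0 = ((r : ℂ)) • e := rfl
  have hφ'succ : ∀ n, φ' (n + 1) = ψ n := fun n => rfl
  -- total norm is 1
  have hnorm1 : (∑' i, ENNReal.ofReal (‖φ' i‖ ^ 2)) = 1 := by
    rw [tsum_eq_zero_add' ENNReal.summable]
    have h0 : ‖φ' 0‖ ^ 2 = 1 - s := by
      rw [hφ'0, norm_smul, Complex.norm_real, Real.norm_eq_abs, abs_of_nonneg hrnn,
        mul_pow, he1, one_pow, mul_one, hr2]
    simp only [hφ'succ]
    rw [h0, hsS, ← ENNReal.ofReal_add (by linarith) hsnn]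
    norm_num
  -- total form value is finite
  have hqfin : (∑' i, G.q (φ' i)) ≠ ∞ := by
    rw [tsum_eq_zero_add' ENNReal.summable]
    simp only [hφ'succ]
    apply ENNReal.add_ne_top.mpr
    constructor
    · rw [hφ'0, G.q_smul]
      exact ENNReal.mul_ne_top ENNReal.ofReal_ne_top heq'
    · exact hVne
  have hAfin := hfin φ' hnorm1 hqfin
  -- but the second-moment sum is infinite
  apply hAfin
  rw [tsum_eq_zero_add' ENNReal.summable]
  simp only [hφ'succ]
  have htail : (∑' n, ENNReal.ofReal (‖A (ψ n)‖ ^ 2)) = ∞ := by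
    have hge : ∀ n : ℕ, ENNReal.ofReal ((1:ℝ)/2) ≤ ENNReal.ofReal (‖A (ψ n)‖ ^ 2) :=
      fun n => ENNReal.ofReal_le_ofReal (hhalf n).le
    have h1 : (∑' _ : ℕ, ENNReal.ofReal ((1:ℝ)/2)) ≤ ∑' n, ENNReal.ofReal (‖A (ψ n)‖ ^ 2) :=
      ENNReal.tsum_le_tsum hge
    have h2 : (∑' _ : ℕ, ENNReal.ofReal ((1:ℝ)/2)) = ∞ :=
      ENNReal.tsum_const_eq_top_of_ne_zero (by rw [Ne, ENNReal.ofReal_eq_zero]; norm_num)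
    exact top_le_iff.mp (h2 ▸ h1)
  rw [htail, add_top]

end
end
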